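/- (Linear programming bound for energy, Yudin.) Let n ≥ 2, let f : ℝ → ℝ be a potential function, let h : ℝ → ℝ, and let c ∈ ℝ. Assume: (i) for every M ≥ 1 and every finite sequence y_1, …, y_M of unit vectors in ℝ^n, Σ_{i=1}^M Σ_{j=1}^M h(⟨y_i, y_j⟩) ≥ M² c (i.e., h − c is a function of positive type on the sphere, which holds when h has an expansion in ultraspherical polynomials with nonnegative coefficients and constant term c); and (ii) h(t) ≤ f(2 − 2t) for all t ∈ [−1, 1). Then every configuration of N pairwise distinct unit vectors x_1, …, x_N in ℝ^n satisfies Σ_{i≠j} f(‖x_i − x_j‖²) ≥ N² c − N h(1). -/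

import Mathlib

/-- Yudin's linear programming bound for energy: if `h - c` is of positive type on the
sphere and `h(t) ≤ f(2-2t)` on `[-1,1)`, then every `N`-point configuration of distinct
unit vectors has `f`-energy at least `N²c - N·h(1)`. -/
theorem yudin_lp_energy_bound (n : ℕ) (hn : 2 ≤ n) (f h : ℝ → ℝ) (c : ℝ)
    (hpos : ∀ M : ℕ, 1 ≤ M → ∀ y : Fin M → EuclideanSpace ℝ (Fin n),
      (∀ i, ‖y i‖ = 1) →
      (M : ℝ) ^ 2 * c ≤ ∑ i, ∑ j, h (inner ℝ (y i) (y j) : ℝ))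
    (hle : ∀ t ∈ Set.Ico (-1 : ℝ) 1, h t ≤ f (2 - 2 * t))
    (N : ℕ) (x : Fin N → EuclideanSpace ℝ (Fin n))
    (hx : ∀ i, ‖x i‖ = 1) (hinj : Function.Injective x) :
    (N : ℝ) ^ 2 * c - N * h 1 ≤
      ∑ p ∈ Finset.univ.offDiag, f (‖x p.1 - x p.2‖ ^ 2) := by
  rcases Nat.eq_zero_or_pos N with rfl | hN
  · simp
  have key := hpos N hN x hx
  have hsplit : ∑ i, ∑ j, h (inner ℝ (x i) (x j) : ℝ)
      = (∑ p ∈ (Finset.univ : Finset (Fin N)).diag, h (inner ℝ (x p.1) (x p.2) : ℝ))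
        + ∑ p ∈ (Finset.univ : Finset (Fin N)).offDiag, h (inner ℝ (x p.1) (x p.2) : ℝ) := by
    rw [← Finset.sum_product', ← Finset.diag_union_offDiag,
      Finset.sum_union (Finset.disjoint_diag_offDiag _)]
  have hdiag : ∀ i : Fin N, (inner ℝ (x i) (x i) : ℝ) = 1 := by
    intro i
    rw [real_inner_self_eq_norm_sq, hx i, one_pow]
  have hdiagsum : (∑ p ∈ (Finset.univ : Finset (Fin N)).diag, h (inner ℝ (x p.1) (x p.2) : ℝ))
      = N * h 1 := by
    rw [Finset.sum_diag]
    simp [hdiag, hx]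
  have hoff : ∀ p ∈ (Finset.univ : Finset (Fin N)).offDiag,
      h (inner ℝ (x p.1) (x p.2) : ℝ) ≤ f (‖x p.1 - x p.2‖ ^ 2) := by
    intro p hp
    rw [Finset.mem_offDiag] at hp
    have hne : x p.1 ≠ x p.2 := fun hxy => hp.2.2 (hinj hxy)
    have h1 : (inner ℝ (x p.1) (x p.2) : ℝ) < 1 :=
      (inner_lt_one_iff_real_of_norm_eq_one (hx _) (hx _)).mpr hne
    have h2 : (-1 : ℝ) ≤ (inner ℝ (x p.1) (x p.2) : ℝ) := by
      have := abs_real_inner_le_norm (x p.1) (x p.2)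
      rw [hx, hx, one_mul] at this
      linarith [abs_le.mp this]
    have := hle _ ⟨h2, h1⟩
    calc h (inner ℝ (x p.1) (x p.2) : ℝ) ≤ f (2 - 2 * (inner ℝ (x p.1) (x p.2) : ℝ)) := this
      _ = f (‖x p.1 - x p.2‖ ^ 2) := by
          rw [@norm_sub_sq_real, hx, hx]; ring_nf
  have hoffsum := Finset.sum_le_sum hoff
  rw [hsplit, hdiagsum] at key
  linarith
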